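/- The Lie algebra 𝔤 of the previous statement has nilradical 𝔫 = span{p₁, p₂, Xₐ, JXₐ, A} and 𝔫 is 2-step nilpotent. -/

import Mathlib

set_option maxHeartbeats 2000000 in
/-- The Lie algebra `𝔤` of STATEMENT 11 has nilradical
`𝔫 = span{p₁, p₂, Xₐ, JXₐ, A}`: the span `N` is an ideal, `[𝔫,[𝔫,𝔫]] = 0`
(2-step nilpotent), and every nilpotent ideal of `𝔤` is contained in `N`.
Here `A = B (inl 0)`, `p₁ = B (inl 1)`, `p₂ = B (inl 2)`, `q₁ = B (inl 3)`,
`q₂ = B (inl 4)`, `Xₐ = B (inr (a,0))`, `JXₐ = B (inr (a,1))`. -/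
theorem stmt12 (n : ℕ) (ε b R₀ : ℝ) (hε : ε = 1 ∨ ε = -1)
    (L : Type*) [LieRing L] [LieAlgebra ℝ L]
    (B : Module.Basis (Fin 5 ⊕ Fin n × Fin 2) ℝ L)
    (A p1 p2 q1 q2 : L) (X Y : Fin n → L)
    (hA : A = B (Sum.inl 0)) (hp1 : p1 = B (Sum.inl 1)) (hp2 : p2 = B (Sum.inl 2))
    (hq1 : q1 = B (Sum.inl 3)) (hq2 : q2 = B (Sum.inl 4))
    (hX : ∀ a, X a = B (Sum.inr (a, 0))) (hY : ∀ a, Y a = B (Sum.inr (a, 1)))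
    (h1 : ⁅A, q1⁆ = (2 : ℝ) • p2)
    (h2 : ⁅A, q2⁆ = (2 * ε) • p1)
    (h3 : ⁅p1, q1⁆ = -p1)
    (h4 : ⁅p1, q2⁆ = p2 + A)
    (h5 : ⁅p2, q1⁆ = -((3 : ℝ) • p2) - A)
    (h6 : ⁅p2, q2⁆ = -(ε • p1))
    (h7 : ⁅q1, q2⁆ = (2 * b) • p2 - ((R₀ - 2 * b) / 2) • A)
    (h8 : ∀ a, ⁅q1, X a⁆ = X a)
    (h9 : ∀ a, ⁅q1, Y a⁆ = Y a)
    (h10 : ∀ a, ⁅q2, X a⁆ = Y a)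
    (h11 : ∀ a, ⁅q2, Y a⁆ = ε • X a)
    (h12 : ∀ a, ⁅X a, Y a⁆ = (2 : ℝ) • p2 + A)
    (hz1 : ⁅A, p1⁆ = 0) (hz2 : ⁅A, p2⁆ = 0)
    (hz3 : ∀ a, ⁅A, X a⁆ = 0) (hz4 : ∀ a, ⁅A, Y a⁆ = 0)
    (hz5 : ⁅p1, p2⁆ = 0)
    (hz6 : ∀ a, ⁅p1, X a⁆ = 0) (hz7 : ∀ a, ⁅p1, Y a⁆ = 0)
    (hz8 : ∀ a, ⁅p2, X a⁆ = 0) (hz9 : ∀ a, ⁅p2, Y a⁆ = 0)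
    (hz10 : ∀ a c, ⁅X a, X c⁆ = 0)
    (hz11 : ∀ a c, ⁅Y a, Y c⁆ = 0)
    (N : Submodule ℝ L)
    (hN : N = Submodule.span ℝ ({A, p1, p2} ∪ Set.range X ∪ Set.range Y)) :
    (∀ x : L, ∀ y ∈ N, ⁅x, y⁆ ∈ N) ∧
    (∀ x ∈ N, ∀ y ∈ N, ∀ z ∈ N, ⁅x, ⁅y, z⁆⁆ = 0) ∧
    (∀ I : LieIdeal ℝ L, LieRing.IsNilpotent I → ∀ v : L, v ∈ I → v ∈ N) := by
  classical
  subst hN hA hp1 hp2 hq1 hq2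
  simp only [hX, hY] at h8 h9 h10 h11 h12 hz3 hz4 hz6 hz7 hz8 hz9 hz10 hz11
  -- abbreviations for the five distinguished indices
  -- skew-symmetric versions of the bracket relations
  have k1 : ⁅B (Sum.inl 3), B (Sum.inl 0)⁆ = -((2:ℝ) • B (Sum.inl 2)) := by
    rw [← lie_skew, h1]
  have k2 : ⁅B (Sum.inl 4), B (Sum.inl 0)⁆ = -((2*ε) • B (Sum.inl 1)) := by
    rw [← lie_skew, h2]
  have k3 : ⁅B (Sum.inl 3), B (Sum.inl 1)⁆ = B (Sum.inl 1) := by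
    rw [← lie_skew, h3, neg_neg]
  have k4 : ⁅B (Sum.inl 4), B (Sum.inl 1)⁆ = -(B (Sum.inl 2) + B (Sum.inl 0)) := by
    rw [← lie_skew, h4]
  have k5 : ⁅B (Sum.inl 3), B (Sum.inl 2)⁆ = (3:ℝ) • B (Sum.inl 2) + B (Sum.inl 0) := by
    rw [← lie_skew, h5]; abel
  have k6 : ⁅B (Sum.inl 4), B (Sum.inl 2)⁆ = ε • B (Sum.inl 1) := by
    rw [← lie_skew, h6, neg_neg]
  have k7 : ⁅B (Sum.inl 4), B (Sum.inl 3)⁆ = -((2*b) • B (Sum.inl 2) - ((R₀ - 2*b)/2) • B (Sum.inl 0)) := by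
    rw [← lie_skew, h7]
  -- the full formula for ad q₁
  have adq1 : ∀ v : L, ⁅B (Sum.inl 3), v⁆ = v
      + (B.repr v (Sum.inl 0)) • (-B (Sum.inl 0) - (2:ℝ) • B (Sum.inl 2))
      + (B.repr v (Sum.inl 2)) • ((2:ℝ) • B (Sum.inl 2) + B (Sum.inl 0))
      + (B.repr v (Sum.inl 3)) • (-B (Sum.inl 3))
      + (B.repr v (Sum.inl 4)) • (-B (Sum.inl 4) + (2*b) • B (Sum.inl 2)
          - ((R₀ - 2*b)/2) • B (Sum.inl 0)) := by
    have hmap : LieAlgebra.ad ℝ L (B (Sum.inl 3)) =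
        LinearMap.id
        + (B.coord (Sum.inl 0)).smulRight (-B (Sum.inl 0) - (2:ℝ) • B (Sum.inl 2))
        + (B.coord (Sum.inl 2)).smulRight ((2:ℝ) • B (Sum.inl 2) + B (Sum.inl 0))
        + (B.coord (Sum.inl 3)).smulRight (-B (Sum.inl 3))
        + (B.coord (Sum.inl 4)).smulRight (-B (Sum.inl 4) + (2*b) • B (Sum.inl 2)
            - ((R₀ - 2*b)/2) • B (Sum.inl 0)) := by
      apply B.ext
      rintro (i | ⟨a, k⟩)
      · fin_cases i <;>
          simp [LieAlgebra.ad_apply, Finsupp.single_apply, k1, k3, k5, h7] <;>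
          module
      · fin_cases k <;>
          simp [LieAlgebra.ad_apply, Finsupp.single_apply, h8, h9]
    intro v
    have hv := LinearMap.congr_fun hmap v
    simpa only [LieAlgebra.ad_apply, LinearMap.add_apply, LinearMap.id_apply,
      LinearMap.smulRight_apply, Module.Basis.coord_apply] using hv
  set N : Submodule ℝ L := Submodule.span ℝ
      (({B (Sum.inl 0), B (Sum.inl 1), B (Sum.inl 2)} : Set L) ∪ Set.range X ∪ Set.range Y)
      with hNdef
  have hAN : B (Sum.inl 0) ∈ N := Submodule.subset_span (by simp)
  have hp1N : B (Sum.inl 1) ∈ N := Submodule.subset_span (by simp)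
  have hp2N : B (Sum.inl 2) ∈ N := Submodule.subset_span (by simp)
  have hXN : ∀ a, B (Sum.inr (a,(0:Fin 2))) ∈ N := by
    intro a
    refine Submodule.subset_span ?_
    rw [← hX a]
    simp
  have hYN : ∀ a, B (Sum.inr (a,(1:Fin 2))) ∈ N := by
    intro a
    refine Submodule.subset_span ?_
    rw [← hY a]
    simp
  have hS : ({B (Sum.inl 0), B (Sum.inl 1), B (Sum.inl 2)} : Set L) ∪ Set.range X ∪ Set.range Y
      = B '' {i | i ≠ Sum.inl 3 ∧ i ≠ Sum.inl 4} := by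
    ext w
    simp only [Set.mem_union, Set.mem_insert_iff, Set.mem_singleton_iff, Set.mem_range,
      Set.mem_image, Set.mem_setOf_eq]
    constructor
    · rintro (((rfl | rfl | rfl) | ⟨a, rfl⟩) | ⟨a, rfl⟩)
      · exact ⟨Sum.inl 0, by simp, rfl⟩
      · exact ⟨Sum.inl 1, by simp, rfl⟩
      · exact ⟨Sum.inl 2, by simp, rfl⟩
      · exact ⟨Sum.inr (a, 0), by simp, (hX a).symm⟩
      · exact ⟨Sum.inr (a, 1), by simp, (hY a).symm⟩
    · rintro ⟨i, ⟨hi3, hi4⟩, rfl⟩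
      rcases i with i | ⟨a, k⟩
      · fin_cases i
        · exact Or.inl (Or.inl (Or.inl rfl))
        · exact Or.inl (Or.inl (Or.inr (Or.inl rfl)))
        · exact Or.inl (Or.inl (Or.inr (Or.inr rfl)))
        · simp at hi3
        · simp at hi4
      · fin_cases k
        · exact Or.inl (Or.inr ⟨a, hX a⟩)
        · exact Or.inr ⟨a, hY a⟩
  have memN_iff : ∀ w : L, w ∈ N ↔ B.repr w (Sum.inl 3) = 0 ∧ B.repr w (Sum.inl 4) = 0 := by
    intro w
    rw [hNdef, hS, Module.Basis.mem_span_image]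
    constructor
    · intro h
      constructor
      · by_contra h3
        exact (h (Finsupp.mem_support_iff.mpr h3)).1 rfl
      · by_contra h4
        exact (h (Finsupp.mem_support_iff.mpr h4)).2 rfl
    · rintro ⟨h3, h4⟩ i hi
      have hi' := Finsupp.mem_support_iff.mp hi
      exact ⟨fun e => hi' (e ▸ h3), fun e => hi' (e ▸ h4)⟩
  -- key lemma: all brackets [X a, Y c] lie in the span of 2p₂ + A
  have hK : ∀ a c, ∃ α : ℝ, ⁅B (Sum.inr (a,(0:Fin 2))), B (Sum.inr (c,(1:Fin 2)))⁆
      = α • ((2:ℝ) • B (Sum.inl 2) + B (Sum.inl 0)) := by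
    intro a c
    set v := ⁅B (Sum.inr (a,(0:Fin 2))), B (Sum.inr (c,(1:Fin 2)))⁆ with hvdef
    have hv2 : ⁅B (Sum.inl 3), v⁆ = (2:ℝ) • v := by
      rw [hvdef, leibniz_lie, h8 a, h9 c, ← hvdef, two_smul]
    have hEq := (adq1 v).symm.trans hv2
    have E3 : B.repr v (Sum.inl 3) = 0 := by
      have := congrArg (fun w => B.repr w (Sum.inl 3)) hEq
      simp [Finsupp.single_apply] at this
      linarith
    have E4 : B.repr v (Sum.inl 4) = 0 := by
      have := congrArg (fun w => B.repr w (Sum.inl 4)) hEq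
      simp [Finsupp.single_apply] at this
      linarith
    have E1 : B.repr v (Sum.inl 1) = 0 := by
      have := congrArg (fun w => B.repr w (Sum.inl 1)) hEq
      simp [Finsupp.single_apply] at this
      linarith
    have E0 : B.repr v (Sum.inl 2) = 2 * B.repr v (Sum.inl 0) := by
      have := congrArg (fun w => B.repr w (Sum.inl 0)) hEq
      simp [Finsupp.single_apply, E4] at this
      linarith
    have Einr : ∀ j : Fin n × Fin 2, B.repr v (Sum.inr j) = 0 := by
      intro j
      have := congrArg (fun w => B.repr w (Sum.inr j)) hEq
      simp [Finsupp.single_apply] at this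
      linarith
    refine ⟨B.repr v (Sum.inl 0), ?_⟩
    apply B.repr.injective
    ext i
    have hR : B.repr ((B.repr v (Sum.inl 0)) • ((2:ℝ) • B (Sum.inl 2) + B (Sum.inl 0)))
        = (B.repr v (Sum.inl 0)) • ((2:ℝ) • Finsupp.single (Sum.inl 2) 1
            + Finsupp.single (Sum.inl 0) 1) := by
      simp
    rw [hR]
    rcases i with i | j
    · fin_cases i <;>
        simp [Finsupp.single_apply, E0, E1, E3, E4, mul_comm]
    · simp [Finsupp.single_apply, Einr j]
  have sk : ∀ x y : L, ⁅x, y⁆ = 0 → ⁅y, x⁆ = 0 := fun x y h => by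
    rw [← lie_skew, h, neg_zero]
  -- generators bracket into N
  have hgen : ∀ g ∈ (({B (Sum.inl 0), B (Sum.inl 1), B (Sum.inl 2)} : Set L)
      ∪ Set.range X ∪ Set.range Y), ∀ i, ⁅B i, g⁆ ∈ N := by
    have hmem0 : ∀ u : L, u = 0 → u ∈ N := fun u h => h ▸ N.zero_mem
    rintro g (((rfl | rfl | rfl) | ⟨a, rfl⟩) | ⟨a, rfl⟩) (i | ⟨c, k⟩)
    · -- g = A
      fin_cases i
      · exact hmem0 _ (lie_self _)
      · exact hmem0 _ (sk _ _ hz1)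
      · exact hmem0 _ (sk _ _ hz2)
      · show ⁅B (Sum.inl 3), B (Sum.inl 0)⁆ ∈ N
        rw [k1]; exact N.neg_mem (N.smul_mem _ hp2N)
      · show ⁅B (Sum.inl 4), B (Sum.inl 0)⁆ ∈ N
        rw [k2]; exact N.neg_mem (N.smul_mem _ hp1N)
    · fin_cases k
      · exact hmem0 _ (sk _ _ (hz3 c))
      · exact hmem0 _ (sk _ _ (hz4 c))
    · -- g = p1
      fin_cases i
      · exact hmem0 _ hz1
      · exact hmem0 _ (lie_self _)
      · exact hmem0 _ (sk _ _ hz5)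
      · show ⁅B (Sum.inl 3), B (Sum.inl 1)⁆ ∈ N
        rw [k3]; exact hp1N
      · show ⁅B (Sum.inl 4), B (Sum.inl 1)⁆ ∈ N
        rw [k4]; exact N.neg_mem (N.add_mem hp2N hAN)
    · fin_cases k
      · exact hmem0 _ (sk _ _ (hz6 c))
      · exact hmem0 _ (sk _ _ (hz7 c))
    · -- g = p2
      fin_cases i
      · exact hmem0 _ hz2
      · exact hmem0 _ hz5
      · exact hmem0 _ (lie_self _)
      · show ⁅B (Sum.inl 3), B (Sum.inl 2)⁆ ∈ N
        rw [k5]; exact N.add_mem (N.smul_mem _ hp2N) hAN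
      · show ⁅B (Sum.inl 4), B (Sum.inl 2)⁆ ∈ N
        rw [k6]; exact N.smul_mem _ hp1N
    · fin_cases k
      · exact hmem0 _ (sk _ _ (hz8 c))
      · exact hmem0 _ (sk _ _ (hz9 c))
    · -- g = X a
      rw [hX a]
      fin_cases i
      · exact hmem0 _ (hz3 a)
      · exact hmem0 _ (hz6 a)
      · exact hmem0 _ (hz8 a)
      · show ⁅B (Sum.inl 3), B (Sum.inr (a,(0:Fin 2)))⁆ ∈ N
        rw [h8 a]; exact hXN a
      · show ⁅B (Sum.inl 4), B (Sum.inr (a,(0:Fin 2)))⁆ ∈ N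
        rw [h10 a]; exact hYN a
    · rw [hX a]
      fin_cases k
      · exact hmem0 _ (hz10 c a)
      · show ⁅B (Sum.inr (c,(1:Fin 2))), B (Sum.inr (a,(0:Fin 2)))⁆ ∈ N
        obtain ⟨α, hα⟩ := hK a c
        rw [← lie_skew, hα]
        exact N.neg_mem (N.smul_mem _ (N.add_mem (N.smul_mem _ hp2N) hAN))
    · -- g = Y a
      rw [hY a]
      fin_cases i
      · exact hmem0 _ (hz4 a)
      · exact hmem0 _ (hz7 a)
      · exact hmem0 _ (hz9 a)
      · show ⁅B (Sum.inl 3), B (Sum.inr (a,(1:Fin 2)))⁆ ∈ N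
        rw [h9 a]; exact hYN a
      · show ⁅B (Sum.inl 4), B (Sum.inr (a,(1:Fin 2)))⁆ ∈ N
        rw [h11 a]; exact N.smul_mem _ (hXN a)
    · rw [hY a]
      fin_cases k
      · show ⁅B (Sum.inr (c,(0:Fin 2))), B (Sum.inr (a,(1:Fin 2)))⁆ ∈ N
        obtain ⟨α, hα⟩ := hK c a
        rw [hα]
        exact N.smul_mem _ (N.add_mem (N.smul_mem _ hp2N) hAN)
      · exact hmem0 _ (hz11 c a)
  have part1 : ∀ x : L, ∀ y ∈ N, ⁅x, y⁆ ∈ N := by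
    intro x y hy
    rw [hNdef] at hy
    induction hy using Submodule.span_induction with
    | mem g hg =>
      have hx : x ∈ Submodule.span ℝ (Set.range B) := by rw [Module.Basis.span_eq]; trivial
      induction hx using Submodule.span_induction with
      | mem z hz => obtain ⟨i, rfl⟩ := hz; exact hgen g hg i
      | zero => rw [zero_lie]; exact N.zero_mem
      | add u w hu hw hxu hxw => rw [add_lie]; exact N.add_mem hxu hxw
      | smul r u hu hxu => rw [smul_lie]; exact N.smul_mem r hxu
    | zero => rw [lie_zero]; exact N.zero_mem
    | add u w hu hw hxu hxw => rw [lie_add]; exact N.add_mem hxu hxw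
    | smul r u hu hxu => rw [lie_smul]; exact N.smul_mem r hxu
  -- the centre element
  have hcent : ∀ x ∈ N, ⁅x, (2:ℝ) • B (Sum.inl 2) + B (Sum.inl 0)⁆ = 0 := by
    intro x hx
    rw [hNdef] at hx
    induction hx using Submodule.span_induction with
    | mem g hg =>
      rcases hg with ((rfl | rfl | rfl) | ⟨a, rfl⟩) | ⟨a, rfl⟩
      · rw [lie_add, lie_smul, hz2, smul_zero, lie_self, zero_add]
      · rw [lie_add, lie_smul, hz5, smul_zero, sk _ _ hz1, zero_add]
      · rw [lie_add, lie_smul, lie_self, smul_zero, sk _ _ hz2, zero_add]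
      · rw [hX a, lie_add, lie_smul, sk _ _ (hz8 a), smul_zero, sk _ _ (hz3 a), zero_add]
      · rw [hY a, lie_add, lie_smul, sk _ _ (hz9 a), smul_zero, sk _ _ (hz4 a), zero_add]
    | zero => rw [zero_lie]
    | add u w hu hw hxu hxw => rw [add_lie, hxu, hxw, zero_add]
    | smul r u hu hxu => rw [smul_lie, hxu, smul_zero]
  have hZ : ∀ y ∈ N, ∀ z ∈ N,
      ⁅y, z⁆ ∈ Submodule.span ℝ {((2:ℝ) • B (Sum.inl 2) + B (Sum.inl 0))} := by
    have hmem0 : ∀ u : L, u = 0 →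
        u ∈ Submodule.span ℝ {((2:ℝ) • B (Sum.inl 2) + B (Sum.inl 0))} :=
      fun u h => h ▸ Submodule.zero_mem _
    intro y hy z hz
    rw [hNdef] at hy hz
    induction hy, hz using Submodule.span_induction₂ with
    | mem_mem g g' hg hg' =>
      rcases hg with ((rfl | rfl | rfl) | ⟨a, rfl⟩) | ⟨a, rfl⟩ <;>
        rcases hg' with ((rfl | rfl | rfl) | ⟨c, rfl⟩) | ⟨c, rfl⟩
      · exact hmem0 _ (lie_self _)
      · exact hmem0 _ hz1
      · exact hmem0 _ hz2
      · rw [hX c]; exact hmem0 _ (hz3 c)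
      · rw [hY c]; exact hmem0 _ (hz4 c)
      · exact hmem0 _ (sk _ _ hz1)
      · exact hmem0 _ (lie_self _)
      · exact hmem0 _ hz5
      · rw [hX c]; exact hmem0 _ (hz6 c)
      · rw [hY c]; exact hmem0 _ (hz7 c)
      · exact hmem0 _ (sk _ _ hz2)
      · exact hmem0 _ (sk _ _ hz5)
      · exact hmem0 _ (lie_self _)
      · rw [hX c]; exact hmem0 _ (hz8 c)
      · rw [hY c]; exact hmem0 _ (hz9 c)
      · rw [hX a]; exact hmem0 _ (sk _ _ (hz3 a))
      · rw [hX a]; exact hmem0 _ (sk _ _ (hz6 a))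
      · rw [hX a]; exact hmem0 _ (sk _ _ (hz8 a))
      · rw [hX a, hX c]; exact hmem0 _ (hz10 a c)
      · rw [hX a, hY c]
        obtain ⟨α, hα⟩ := hK a c
        rw [hα]
        exact Submodule.smul_mem _ _ (Submodule.mem_span_singleton_self _)
      · rw [hY a]; exact hmem0 _ (sk _ _ (hz4 a))
      · rw [hY a]; exact hmem0 _ (sk _ _ (hz7 a))
      · rw [hY a]; exact hmem0 _ (sk _ _ (hz9 a))
      · rw [hY a, hX c]
        obtain ⟨α, hα⟩ := hK c a
        rw [← lie_skew, hα]
        exact Submodule.neg_mem _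
          (Submodule.smul_mem _ _ (Submodule.mem_span_singleton_self _))
      · rw [hY a, hY c]; exact hmem0 _ (hz11 a c)
    | zero_left z hz => exact hmem0 _ (zero_lie z)
    | zero_right y hy => exact hmem0 _ (lie_zero y)
    | add_left u w z hu hw hz hu' hw' => rw [add_lie]; exact Submodule.add_mem _ hu' hw'
    | add_right y u w hy hu hw hu' hw' => rw [lie_add]; exact Submodule.add_mem _ hu' hw'
    | smul_left r u z hu hz hu' => rw [smul_lie]; exact Submodule.smul_mem _ _ hu'
    | smul_right r y u hy hu hu' => rw [lie_smul]; exact Submodule.smul_mem _ _ hu'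
  have part2 : ∀ x ∈ N, ∀ y ∈ N, ∀ z ∈ N, ⁅x, ⁅y, z⁆⁆ = 0 := by
    intro x hx y hy z hz
    obtain ⟨α, hα⟩ := Submodule.mem_span_singleton.mp (hZ y hy z hz)
    rw [← hα, lie_smul, hcent x hx, smul_zero]
  -- right-bracket coordinate formulas for A, p1, p2
  have adA : ∀ v : L, ⁅B (Sum.inl 0), v⁆
      = (B.repr v (Sum.inl 3)) • ((2:ℝ) • B (Sum.inl 2))
      + (B.repr v (Sum.inl 4)) • ((2*ε) • B (Sum.inl 1)) := by
    have hmap : LieAlgebra.ad ℝ L (B (Sum.inl 0)) =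
        (B.coord (Sum.inl 3)).smulRight ((2:ℝ) • B (Sum.inl 2))
        + (B.coord (Sum.inl 4)).smulRight ((2*ε) • B (Sum.inl 1)) := by
      apply B.ext
      rintro (i | ⟨a, k⟩)
      · fin_cases i <;>
          simp [LieAlgebra.ad_apply, Finsupp.single_apply, h1, h2, hz1, hz2]
      · fin_cases k <;>
          simp [LieAlgebra.ad_apply, Finsupp.single_apply, hz3, hz4]
    intro v
    have hv := LinearMap.congr_fun hmap v
    simpa only [LieAlgebra.ad_apply, LinearMap.add_apply,
      LinearMap.smulRight_apply, Module.Basis.coord_apply] using hv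
  have adp1 : ∀ v : L, ⁅B (Sum.inl 1), v⁆
      = (B.repr v (Sum.inl 3)) • (-B (Sum.inl 1))
      + (B.repr v (Sum.inl 4)) • (B (Sum.inl 2) + B (Sum.inl 0)) := by
    have hmap : LieAlgebra.ad ℝ L (B (Sum.inl 1)) =
        (B.coord (Sum.inl 3)).smulRight (-B (Sum.inl 1))
        + (B.coord (Sum.inl 4)).smulRight (B (Sum.inl 2) + B (Sum.inl 0)) := by
      apply B.ext
      rintro (i | ⟨a, k⟩)
      · fin_cases i <;>
          simp [LieAlgebra.ad_apply, Finsupp.single_apply, h3, h4, hz5, sk _ _ hz1]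
      · fin_cases k <;>
          simp [LieAlgebra.ad_apply, Finsupp.single_apply, hz6, hz7]
    intro v
    have hv := LinearMap.congr_fun hmap v
    simpa only [LieAlgebra.ad_apply, LinearMap.add_apply,
      LinearMap.smulRight_apply, Module.Basis.coord_apply] using hv
  have adp2 : ∀ v : L, ⁅B (Sum.inl 2), v⁆
      = (B.repr v (Sum.inl 3)) • (-((3:ℝ) • B (Sum.inl 2)) - B (Sum.inl 0))
      + (B.repr v (Sum.inl 4)) • (-(ε • B (Sum.inl 1))) := by
    have hmap : LieAlgebra.ad ℝ L (B (Sum.inl 2)) =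
        (B.coord (Sum.inl 3)).smulRight (-((3:ℝ) • B (Sum.inl 2)) - B (Sum.inl 0))
        + (B.coord (Sum.inl 4)).smulRight (-(ε • B (Sum.inl 1))) := by
      apply B.ext
      rintro (i | ⟨a, k⟩)
      · fin_cases i <;>
          simp [LieAlgebra.ad_apply, Finsupp.single_apply, h5, h6, sk _ _ hz2, sk _ _ hz5]
      · fin_cases k <;>
          simp [LieAlgebra.ad_apply, Finsupp.single_apply, hz8, hz9]
    intro v
    have hv := LinearMap.congr_fun hmap v
    simpa only [LieAlgebra.ad_apply, LinearMap.add_apply,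
      LinearMap.smulRight_apply, Module.Basis.coord_apply] using hv
  -- Part 3: every nilpotent ideal is contained in N
  have part3 : ∀ I : LieIdeal ℝ L, LieRing.IsNilpotent I → ∀ v : L, v ∈ I → v ∈ N := by
    intro I hI v hv
    haveI := hI
    obtain ⟨k, hk⟩ := LieAlgebra.nilpotent_ad_of_nilpotent_algebra ℝ I
    have coe_pow : ∀ (x w : I) (m : ℕ), (((LieAlgebra.ad ℝ I x ^ m) w : I) : L)
        = (LieAlgebra.ad ℝ L (x : L) ^ m) (w : L) := by
      intro x w m
      induction m with
      | zero => simp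
      | succ m ih =>
        rw [pow_succ', pow_succ']
        simp only [Module.End.mul_apply, LieAlgebra.ad_apply]
        rw [← ih]
        rfl
    have ene : ((2:ℝ) • B (Sum.inl 2) + B (Sum.inl 0)) ≠ 0 := by
      intro h0
      have := congrArg (fun w => B.repr w (Sum.inl 0)) h0
      simp [Finsupp.single_apply] at this
    have fne : (B (Sum.inl 2) + B (Sum.inl 0)) ≠ 0 := by
      intro h0
      have := congrArg (fun w => B.repr w (Sum.inl 0)) h0
      simp [Finsupp.single_apply] at this
    -- Step 1: the q₁-coordinate vanishes
    have hbe : ⁅(2:ℝ) • B (Sum.inl 2) + B (Sum.inl 0), v⁆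
        = (-(2 * B.repr v (Sum.inl 3))) • ((2:ℝ) • B (Sum.inl 2) + B (Sum.inl 0)) := by
      rw [add_lie, smul_lie, adp2 v, adA v]
      module
    have hev : ⁅v, (2:ℝ) • B (Sum.inl 2) + B (Sum.inl 0)⁆
        = (2 * B.repr v (Sum.inl 3)) • ((2:ℝ) • B (Sum.inl 2) + B (Sum.inl 0)) := by
      rw [← lie_skew, hbe]
      module
    have hpow : ∀ m : ℕ, (LieAlgebra.ad ℝ L v ^ m) ((2:ℝ) • B (Sum.inl 2) + B (Sum.inl 0))
        = (2 * B.repr v (Sum.inl 3))^m • ((2:ℝ) • B (Sum.inl 2) + B (Sum.inl 0)) := by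
      intro m
      induction m with
      | zero => simp
      | succ m ih =>
        rw [pow_succ', Module.End.mul_apply, ih, map_smul, LieAlgebra.ad_apply, hev,
          smul_smul, ← pow_succ]
    have hdelta : B.repr v (Sum.inl 3) = 0 := by
      have hmem : ⁅(2:ℝ) • B (Sum.inl 2) + B (Sum.inl 0), v⁆ ∈ I :=
        LieSubmodule.lie_mem I hv
      have h0 : ((LieAlgebra.ad ℝ I ⟨v, hv⟩ ^ k) ⟨_, hmem⟩ : I) = 0 := by
        rw [hk ⟨v, hv⟩]
        rfl
      have h1L := congrArg (Subtype.val) h0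
      rw [coe_pow] at h1L
      simp only [ZeroMemClass.coe_zero] at h1L
      rw [hbe, map_smul, hpow k, smul_smul] at h1L
      have hc := (smul_eq_zero.mp h1L).resolve_right ene
      have h2 : (2 * B.repr v (Sum.inl 3))^(k+1) = 0 := by
        rw [pow_succ]
        linear_combination -hc
      have h3 := (pow_eq_zero_iff (Nat.succ_ne_zero k)).mp h2
      linarith
    -- Step 2: the q₂-coordinate vanishes
    have hzeta : B.repr v (Sum.inl 4) = 0 := by
      have hp1v : ⁅B (Sum.inl 1), v⁆
          = (B.repr v (Sum.inl 4)) • (B (Sum.inl 2) + B (Sum.inl 0)) := by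
        rw [adp1 v, hdelta]
        module
      have hfv : ⁅B (Sum.inl 2) + B (Sum.inl 0), v⁆
          = (ε * B.repr v (Sum.inl 4)) • B (Sum.inl 1) := by
        rw [add_lie, adp2 v, adA v, hdelta]
        module
      have hvf : ⁅v, B (Sum.inl 2) + B (Sum.inl 0)⁆
          = (-(ε * B.repr v (Sum.inl 4))) • B (Sum.inl 1) := by
        rw [← lie_skew, hfv]
        module
      have hvp1 : ⁅v, B (Sum.inl 1)⁆
          = (-(B.repr v (Sum.inl 4))) • (B (Sum.inl 2) + B (Sum.inl 0)) := by
        rw [← lie_skew, hp1v]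
        module
      have had2 : (LieAlgebra.ad ℝ L v ^ 2) (B (Sum.inl 2) + B (Sum.inl 0))
          = (ε * (B.repr v (Sum.inl 4))^2) • (B (Sum.inl 2) + B (Sum.inl 0)) := by
        rw [pow_two, Module.End.mul_apply, LieAlgebra.ad_apply, LieAlgebra.ad_apply,
          hvf, lie_smul, hvp1, smul_smul]
        module
      have h2step : ∀ m : ℕ, (LieAlgebra.ad ℝ L v ^ (2*m)) (B (Sum.inl 2) + B (Sum.inl 0))
          = (ε * (B.repr v (Sum.inl 4))^2)^m • (B (Sum.inl 2) + B (Sum.inl 0)) := by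
        intro m
        induction m with
        | zero => simp
        | succ m ih =>
          have h2m : 2*(m+1) = (2*m) + 2 := by ring
          rw [h2m, pow_add, Module.End.mul_apply, had2, map_smul, ih, smul_smul]
          congr 1
          ring
      have hw : ⁅B (Sum.inl 1), v⁆ ∈ I := LieSubmodule.lie_mem I hv
      have h00 : ((LieAlgebra.ad ℝ I ⟨v, hv⟩ ^ (2*k)) ⟨_, hw⟩ : I) = 0 := by
        rw [two_mul, pow_add, Module.End.mul_apply, hk ⟨v, hv⟩]
        simp
      have h1L := congrArg (Subtype.val) h00
      rw [coe_pow] at h1L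
      simp only [ZeroMemClass.coe_zero] at h1L
      rw [hp1v, map_smul, h2step k, smul_smul] at h1L
      have hc := (smul_eq_zero.mp h1L).resolve_right fne
      have heps : ε^2 = 1 := by rcases hε with rfl | rfl <;> norm_num
      have h5 : (B.repr v (Sum.inl 4))^(2*k+1) = 0 := by
        have hid : (B.repr v (Sum.inl 4))^(2*k+1)
            = (ε^2)^k * (B.repr v (Sum.inl 4))^(2*k+1) := by
          rw [heps, one_pow, one_mul]
        rw [hid]
        calc (ε^2)^k * (B.repr v (Sum.inl 4))^(2*k+1)
            = ε^k * (B.repr v (Sum.inl 4) * (ε * (B.repr v (Sum.inl 4))^2)^k) := by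
              ring
          _ = 0 := by rw [hc, mul_zero]
      exact (pow_eq_zero_iff (Nat.succ_ne_zero _)).mp h5
    exact (memN_iff v).mpr ⟨hdelta, hzeta⟩
  exact ⟨part1, part2, part3⟩
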